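/- System R₀ satisfies subject expansion: if Γ ⊢ t' : τ is derivable and t →β t', then Γ ⊢ t : τ is derivable. -/

import Mathlib

inductive Term : Type
  | var : ℕ → Term
  | lam : Term → Term
  | app : Term → Term → Term
  deriving DecidableEq

/-- de Bruijn shifting: `Term.shift d c t` adds `d` to every variable of `t` that is `≥ c`. -/
def Term.shift (d : ℕ) : ℕ → Term → Term
  | c, .var n => if n < c then .var n else .var (n + d)
  | c, .lam t => .lam (Term.shift d (c + 1) t)
  | c, .app t u => .app (Term.shift d c t) (Term.shift d c u)

/-- Capture-avoiding substitution: `Term.subst k s t` substitutes `s` for variable `k` in `t`. -/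
def Term.subst : ℕ → Term → Term → Term
  | k, s, .var n => if n < k then .var n else if n = k then Term.shift k 0 s else .var (n - 1)
  | k, s, .lam b => .lam (Term.subst (k + 1) s b)
  | k, s, .app t u => .app (Term.subst k s t) (Term.subst k s u)

/-- One-step β-reduction. -/
inductive Beta : Term → Term → Prop
  | beta (b a : Term) : Beta (.app (.lam b) a) (Term.subst 0 a b)
  | appL {t t'} (u : Term) : Beta t t' → Beta (.app t u) (.app t' u)
  | appR (t : Term) {u u'} : Beta u u' → Beta (.app t u) (.app t u')
  | lam {t t'} : Beta t t' → Beta (.lam t) (.lam t')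

/-- Types of the non-idempotent intersection type system R₀:
`τ ::= o | M → τ` where `M` is a finite multiset of types (represented as a list). -/
inductive RTy : Type
  | atom : ℕ → RTy
  | arr : List RTy → RTy → RTy

/-- Contexts map (de Bruijn) variables to finite multisets of types. -/
abbrev RCtx : Type := ℕ → Multiset RTy

/-- The relevant context assigning exactly `[τ]` to variable `n` and `[]` elsewhere. -/
def RCtx.single (n : ℕ) (τ : RTy) : RCtx := fun m => if m = n then {τ} else 0

/-- Extend a context with a multiset for the newly bound variable 0. -/
def pushR (Γ : RCtx) (M : Multiset RTy) : RCtx := fun n =>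
  match n with
  | 0 => M
  | n + 1 => Γ n

/-- The Gardner–de Carvalho system R₀ (relevant, non-idempotent intersection types). -/
inductive RTyping : RCtx → Term → RTy → Prop
  | var (n : ℕ) (τ : RTy) : RTyping (RCtx.single n τ) (.var n) τ
  | abs {Γ t τ} (M : List RTy) :
      RTyping (pushR Γ (↑M : Multiset RTy)) t τ → RTyping Γ (.lam t) (.arr M τ)
  | app {Γ t u τ} (M : List RTy) (Δs : List (RCtx × RTy)) :
      RTyping Γ t (.arr M τ) → Δs.map Prod.snd = M →
      (∀ p ∈ Δs, RTyping p.1 u p.2) →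
      RTyping (Γ + (Δs.map Prod.fst).sum) (.app t u) τ


section Aux

/-- Lift a context by `k`: variable `n+k` gets `Δ n`, variables below `k` get `0`. -/
def liftCtx (k : ℕ) (Δ : RCtx) : RCtx := fun n => if n < k then 0 else Δ (n - k)

/-- Insert a multiset `M` at position `k`, shifting higher variables up. -/
def insertCtx (k : ℕ) (M : Multiset RTy) (Γ : RCtx) : RCtx :=
  fun n => if n < k then Γ n else if n = k then M else Γ (n - 1)

/-- Remove `d` positions starting at `c`. -/
def lowerCtx (c d : ℕ) (Γ : RCtx) : RCtx := fun n => if n < c then Γ n else Γ (n + d)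

lemma RTyping.cast {Γ Γ' : RCtx} {t : Term} {τ : RTy} (h : RTyping Γ t τ) (hΓ : Γ = Γ') :
    RTyping Γ' t τ := hΓ ▸ h

lemma sum_apply' (L : List RCtx) (n : ℕ) : L.sum n = (L.map (fun Γ => Γ n)).sum := by
  induction L with
  | nil => rfl
  | cons a L ih => simp [List.sum_cons, Pi.add_apply, ih]

lemma lowerCtx_add (c d : ℕ) (A B : RCtx) :
    lowerCtx c d (A + B) = lowerCtx c d A + lowerCtx c d B := by
  funext n; simp only [lowerCtx, Pi.add_apply]; split_ifs <;> rfl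

lemma lowerCtx_zero (c d : ℕ) : lowerCtx c d (0 : RCtx) = 0 := by
  funext n; simp only [lowerCtx, Pi.zero_apply]; split_ifs <;> rfl

lemma lowerCtx_sum (c d : ℕ) (L : List RCtx) :
    lowerCtx c d L.sum = (L.map (lowerCtx c d)).sum := by
  induction L with
  | nil => simpa using lowerCtx_zero c d
  | cons a L ih => simp [List.sum_cons, lowerCtx_add, ih]

lemma insertCtx_add (k : ℕ) (M N : Multiset RTy) (A B : RCtx) :
    insertCtx k M A + insertCtx k N B = insertCtx k (M + N) (A + B) := by
  funext n; simp only [insertCtx, Pi.add_apply]; split_ifs <;> rfl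

lemma insertCtx_zero_eq (k : ℕ) : insertCtx k 0 (0 : RCtx) = 0 := by
  funext n; simp only [insertCtx, Pi.zero_apply]; split_ifs <;> rfl

lemma insertCtx_zero (M : Multiset RTy) (Γ : RCtx) : insertCtx 0 M Γ = pushR Γ M := by
  funext n; cases n <;> simp [insertCtx, pushR]

/-- Anti-shift: a typing of a shifted term uses no variables in the shifted-away range,
and gives a typing of the original term in the lowered context. -/
lemma unshift (d : ℕ) : ∀ (u : Term) (c : ℕ) {Γ : RCtx} {τ : RTy},
    RTyping Γ (Term.shift d c u) τ →
    (∀ n, c ≤ n → n < c + d → Γ n = 0) ∧ RTyping (lowerCtx c d Γ) u τ := by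
  intro u
  induction u with
  | var m =>
    intro c Γ τ h
    simp only [Term.shift] at h
    split_ifs at h with hm
    · cases h
      constructor
      · intro n hn hn'
        simp only [RCtx.single]
        have : ¬ (n = m) := by omega
        simp [this]
      · have : lowerCtx c d (RCtx.single m τ) = RCtx.single m τ := by
          funext n
          simp only [lowerCtx, RCtx.single]
          split_ifs with h1 h2 h3 h4 h5 <;> first | rfl | omega
        rw [this]; exact RTyping.var m τ
    · cases h
      constructor
      · intro n hn hn'
        simp only [RCtx.single]
        have : ¬ (n = m + d) := by omega
        simp [this]
      · have : lowerCtx c d (RCtx.single (m + d) τ) = RCtx.single m τ := by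
          funext n
          simp only [lowerCtx, RCtx.single]
          split_ifs with h1 h2 h3 h4 h5 <;> first | rfl | omega
        rw [this]; exact RTyping.var m τ
  | lam b ih =>
    intro c Γ τ h
    cases h with
    | abs M hb =>
      obtain ⟨hz, hb'⟩ := ih (c + 1) hb
      constructor
      · intro n hn hn'
        have := hz (n + 1) (by omega) (by omega)
        simpa [pushR] using this
      · apply RTyping.abs
        refine hb'.cast ?_
        funext n
        cases n with
        | zero => simp [lowerCtx, pushR]
        | succ m =>
          have e : m + 1 + d = (m + d) + 1 := by omega
          simp only [lowerCtx, pushR, e]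
          split_ifs with h1 h2 <;> first | rfl | omega
  | app t u iht ihu =>
    intro c Γ τ h
    cases h with
    | app M Δs ht hmap hu =>
      obtain ⟨hz₁, ht'⟩ := iht c ht
      constructor
      · intro n hn hn'
        simp only [Pi.add_apply, hz₁ n hn hn', zero_add, sum_apply', List.map_map]
        apply List.sum_eq_zero
        intro x hx
        simp only [List.mem_map] at hx
        obtain ⟨p, hp, rfl⟩ := hx
        exact (ihu c (hu p hp)).1 n hn hn'
      · rw [lowerCtx_add, lowerCtx_sum, List.map_map]
        have : (Δs.map (lowerCtx c d ∘ Prod.fst)).sum =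
            ((Δs.map (fun p => (lowerCtx c d p.1, p.2))).map Prod.fst).sum := by
          rw [List.map_map]; rfl
        rw [this]
        refine RTyping.app M _ ht' ?_ ?_
        · rw [List.map_map]; exact hmap
        · intro p hp
          simp only [List.mem_map] at hp
          obtain ⟨q, hq, rfl⟩ := hp
          exact (ihu c (hu q hq)).2

end Aux

section Aux2

/-- Anti-substitution / splitting lemma. -/
lemma anti_subst (s : Term) : ∀ (r : Term) (k : ℕ) {Γ : RCtx} {τ : RTy},
    RTyping Γ (Term.subst k s r) τ →
    ∃ (Δs : List (RCtx × RTy)) (Γ₀ : RCtx),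
      (∀ p ∈ Δs, RTyping p.1 s p.2) ∧
      RTyping (insertCtx k ↑(Δs.map Prod.snd) Γ₀) r τ ∧
      Γ = Γ₀ + (Δs.map (fun p => liftCtx k p.1)).sum := by
  intro r
  induction r with
  | var n =>
    intro k Γ τ h
    simp only [Term.subst] at h
    split_ifs at h with h1 h2
    · -- n < k
      cases h
      refine ⟨[], RCtx.single n τ, by simp, ?_, by simp⟩
      refine (RTyping.var n τ).cast ?_
      funext m
      simp only [insertCtx, RCtx.single, Multiset.coe_nil]
      split_ifs <;> first | rfl | omega
    · -- n = k, h : Γ ⊢ shift k 0 s : τ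
      subst h2
      obtain ⟨hz, hs⟩ := unshift n s 0 h
      refine ⟨[(lowerCtx 0 n Γ, τ)], 0, ?_, ?_, ?_⟩
      · intro p hp; simp only [List.mem_singleton] at hp; subst hp; exact hs
      · refine (RTyping.var n τ).cast ?_
        funext m
        simp only [insertCtx, RCtx.single, List.map_cons, List.map_nil, Pi.zero_apply]
        split_ifs <;> first | rfl | omega
      · funext m
        simp only [Pi.add_apply, Pi.zero_apply, List.map_cons, List.map_nil,
          List.sum_cons, List.sum_nil, zero_add, add_zero, liftCtx, lowerCtx]
        split_ifs with hm hm2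
        · exact hz m (by omega) (by omega)
        · exact absurd hm2 (by omega)
        · congr 1
          omega
    · -- n > k
      cases h
      refine ⟨[], RCtx.single (n - 1) τ, by simp, ?_, by simp⟩
      refine (RTyping.var n τ).cast ?_
      funext m
      simp only [insertCtx, RCtx.single, Multiset.coe_nil]
      split_ifs <;> first | rfl | omega
  | lam b ih =>
    intro k Γ τ h
    cases h with
    | abs M' hb =>
      obtain ⟨Δs, Γ₀', hs, hb', hsum⟩ := ih (k + 1) hb
      have h0 : Γ₀' 0 = (M' : Multiset RTy) := by
        have := congrFun hsum 0
        simp only [pushR, Pi.add_apply, sum_apply', List.map_map] at this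
        rw [List.sum_eq_zero, add_zero] at this
        · exact this.symm
        · intro x hx
          simp only [List.mem_map, Function.comp] at hx
          obtain ⟨p, hp, rfl⟩ := hx
          simp [liftCtx]
      refine ⟨Δs, fun n => Γ₀' (n + 1), hs, ?_, ?_⟩
      · apply RTyping.abs
        refine hb'.cast ?_
        funext m
        cases m with
        | zero => simp only [insertCtx, pushR, if_pos (by omega : (0:ℕ) < k + 1)]; exact h0
        | succ m =>
          simp only [insertCtx, pushR]
          split_ifs with h1 h2 h3 h4 h5 <;>
            first | rfl | omega | (exfalso; omega) | (apply congrArg; omega)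
      · funext m
        have := congrFun hsum (m + 1)
        simp only [pushR, Pi.add_apply, sum_apply', List.map_map] at this ⊢
        rw [this]
        congr 2
        apply List.map_congr_left
        intro p _
        simp only [Function.comp, liftCtx]
        split_ifs with h1 h2 h3 <;> first | rfl | omega | (exfalso; omega) | (apply congrArg; omega)
  | app t u iht ihu =>
    intro k Γ τ h
    cases h with
    | app M' Es ht hmap hu =>
      obtain ⟨Δst, Γ₀t, hst, ht', hsumt⟩ := iht k ht
      -- process the list Es
      have hlist : ∀ (Es : List (RCtx × RTy)), (∀ p ∈ Es, RTyping p.1 (Term.subst k s u) p.2) →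
          ∃ (Δs Es' : List (RCtx × RTy)) (Γ₀' : RCtx),
            Es'.map Prod.snd = Es.map Prod.snd ∧
            (∀ p ∈ Δs, RTyping p.1 s p.2) ∧
            (∀ p ∈ Es', RTyping p.1 u p.2) ∧
            (Es'.map Prod.fst).sum = insertCtx k ↑(Δs.map Prod.snd) Γ₀' ∧
            (Es.map Prod.fst).sum = Γ₀' + (Δs.map (fun p => liftCtx k p.1)).sum := by
        intro Es
        induction Es with
        | nil =>
          intro _
          exact ⟨[], [], 0, rfl, by simp, by simp, by simp [insertCtx_zero_eq], by simp⟩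
        | cons E Es ihEs =>
          intro hmem
          obtain ⟨ΔsE, Γ₀E, hsE, hE', hsumE⟩ := ihu k (hmem E List.mem_cons_self)
          obtain ⟨Δs', Es'', Γ₀'', hsnd, hs', hu', heq, hsum'⟩ :=
            ihEs (fun p hp => hmem p (List.mem_cons_of_mem E hp))
          refine ⟨ΔsE ++ Δs', (insertCtx k ↑(ΔsE.map Prod.snd) Γ₀E, E.2) :: Es'',
            Γ₀E + Γ₀'', by simp [hsnd], ?_, ?_, ?_, ?_⟩
          · intro p hp
            rcases List.mem_append.1 hp with h | h
            · exact hsE p h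
            · exact hs' p h
          · intro p hp
            rcases List.mem_cons.1 hp with h | h
            · subst h; exact hE'
            · exact hu' p h
          · simp only [List.map_cons, List.sum_cons, heq, insertCtx_add, List.map_append,
              Multiset.coe_add]
          · simp only [List.map_cons, List.sum_cons, hsumE, hsum', List.map_append,
              List.sum_append]
            funext m; simp only [Pi.add_apply]; abel
      obtain ⟨Δsu, Es', Γ₀u, hsnd, hsu, hu', heq, hsum'⟩ := hlist Es hu
      refine ⟨Δst ++ Δsu, Γ₀t + Γ₀u, ?_, ?_, ?_⟩
      · intro p hp
        rcases List.mem_append.1 hp with h | h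
        · exact hst p h
        · exact hsu p h
      · have := RTyping.app M' Es' ht' (hsnd.trans hmap) hu'
        refine this.cast ?_
        rw [heq, insertCtx_add]
        simp [Multiset.coe_add]
      · rw [hsumt, hsum']
        simp only [List.map_append, List.sum_append]
        funext m; simp only [Pi.add_apply]; abel

end Aux2

/-- Subject expansion for system R₀. -/
theorem R0_subject_expansion {Γ : RCtx} {t t' : Term} {τ : RTy}
    (h : RTyping Γ t' τ) (hb : Beta t t') : RTyping Γ t τ := by
  induction hb generalizing Γ τ with
  | beta b a =>
    obtain ⟨Δs, Γ₀, hs, hb', hΓ⟩ := anti_subst a b 0 h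
    have habs : RTyping Γ₀ (.lam b) (.arr (Δs.map Prod.snd) τ) :=
      RTyping.abs _ (hb'.cast (insertCtx_zero _ _))
    have := RTyping.app _ Δs habs rfl hs
    refine this.cast ?_
    rw [hΓ]; rfl
  | appL u hb ih =>
    cases h with
    | app M Δs ht hmap hu => exact RTyping.app M Δs (ih ht) hmap hu
  | appR t hb ih =>
    cases h with
    | app M Δs ht hmap hu => exact RTyping.app M Δs ht hmap (fun p hp => ih (hu p hp))
  | lam hb ih =>
    cases h with
    | abs M ht => exact RTyping.abs M (ih ht)
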